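/- Let (M, dist) be a compact metric space whose metric is convex (for all distinct P, Q there exists R with dist(P,R) = dist(R,Q) = dist(P,Q)/2). Then for every pair of points P, Q ∈ M there is a continuous path γ : [0,1] → M with γ(0) = P, γ(1) = Q such that for every t ∈ [0,1], dist(P,Q) = dist(P, γ(t)) + dist(γ(t), Q). -/

import Mathlib

noncomputable section

namespace Stmt10Aux

variable {M : Type*} [MetricSpace M]

/-- dyadic grid of points: `geoGrid mid P Q n k` is the point at parameter `k / 2^n`. -/
def geoGrid (mid : M → M → M) (P Q : M) : ℕ → ℕ → M
  | 0, k => if k = 0 then P else Q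
  | (n+1), k =>
      if k % 2 = 0 then geoGrid mid P Q n (k / 2)
      else mid (geoGrid mid P Q n (k / 2)) (geoGrid mid P Q n (k / 2 + 1))

variable (mid : M → M → M) (P Q : M)

lemma grid_zero : ∀ n, geoGrid mid P Q n 0 = P := by
  intro n
  induction n with
  | zero => simp [geoGrid]
  | succ n ih => simp [geoGrid, ih]

lemma grid_top : ∀ n, geoGrid mid P Q n (2 ^ n) = Q := by
  intro n
  induction n with
  | zero => simp [geoGrid]
  | succ n ih =>
      have h1 : 2 ^ (n + 1) % 2 = 0 := by
        simp [pow_succ, Nat.mul_mod_left]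
      have h2 : 2 ^ (n + 1) / 2 = 2 ^ n := by
        rw [pow_succ]; exact Nat.mul_div_cancel _ (by norm_num)
      simp [geoGrid, h1, h2, ih]

lemma grid_double (n k : ℕ) :
    geoGrid mid P Q (n + 1) (2 * k) = geoGrid mid P Q n k := by
  simp [geoGrid, Nat.mul_mod_right, Nat.mul_div_cancel_left k (by norm_num : 0 < 2)]

variable (hmid : ∀ a b : M, dist a (mid a b) = dist a b / 2 ∧
    dist (mid a b) b = dist a b / 2)

include hmid

lemma grid_step : ∀ n k, dist (geoGrid mid P Q n k) (geoGrid mid P Q n (k + 1))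
    ≤ dist P Q / 2 ^ n := by
  intro n
  induction n with
  | zero =>
      intro k
      rcases Nat.eq_zero_or_pos k with hk | hk
      · subst hk; simp [geoGrid]
      · have : k ≠ 0 := hk.ne'
        simp [geoGrid, this, dist_nonneg]
  | succ n ih =>
      intro k
      rcases Nat.even_or_odd k with ⟨j, hj⟩ | ⟨j, hj⟩
      · subst hj
        have hk : j + j = 2 * j := by ring
        rw [hk]
        have h1 : geoGrid mid P Q (n+1) (2*j) = geoGrid mid P Q n j :=
          grid_double mid P Q n j
        have hmod : (2*j+1) % 2 = 1 := by omega
        have hdiv : (2*j+1) / 2 = j := by omega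
        have h2 : geoGrid mid P Q (n+1) (2*j+1)
            = mid (geoGrid mid P Q n j) (geoGrid mid P Q n (j+1)) := by
          simp [geoGrid, hmod, hdiv]
        rw [h1, h2, (hmid _ _).1]
        have := ih j
        rw [pow_succ, div_mul_eq_div_div]
        linarith
      · subst hj
        have hmod : (2*j+1) % 2 = 1 := by omega
        have hdiv : (2*j+1) / 2 = j := by omega
        have h2 : geoGrid mid P Q (n+1) (2*j+1)
            = mid (geoGrid mid P Q n j) (geoGrid mid P Q n (j+1)) := by
          simp [geoGrid, hmod, hdiv]
        have hk : 2*j+1+1 = 2*(j+1) := by ring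
        have h1 : geoGrid mid P Q (n+1) (2*(j+1)) = geoGrid mid P Q n (j+1) :=
          grid_double mid P Q n (j+1)
        rw [hk, h1, h2, (hmid _ _).2]
        have := ih j
        rw [pow_succ, div_mul_eq_div_div]
        linarith

lemma grid_chain : ∀ n k j, dist (geoGrid mid P Q n k) (geoGrid mid P Q n (k + j))
    ≤ j * (dist P Q / 2 ^ n) := by
  intro n k j
  induction j with
  | zero => simp
  | succ j ih =>
      have h := grid_step mid P Q hmid n (k + j)
      calc dist (geoGrid mid P Q n k) (geoGrid mid P Q n (k + (j+1)))
          ≤ dist (geoGrid mid P Q n k) (geoGrid mid P Q n (k + j))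
            + dist (geoGrid mid P Q n (k + j)) (geoGrid mid P Q n (k + j + 1)) := by
            rw [show k + (j+1) = k + j + 1 by ring]; exact dist_triangle _ _ _
        _ ≤ j * (dist P Q / 2 ^ n) + dist P Q / 2 ^ n := by linarith
        _ = (j+1 : ℕ) * (dist P Q / 2 ^ n) := by push_cast; ring

lemma grid_dist_le (n : ℕ) {k l : ℕ} (hkl : k ≤ l) :
    dist (geoGrid mid P Q n k) (geoGrid mid P Q n l)
      ≤ (l - k : ℕ) * (dist P Q / 2 ^ n) := by
  have := grid_chain mid P Q hmid n k (l - k)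
  rwa [Nat.add_sub_cancel' hkl] at this

end Stmt10Aux

end

/-- in a compact metric space with a convex (Menger) metric, any two
points are joined by a continuous path along which distances add up. -/
theorem stmt10 {M : Type*} [MetricSpace M] [CompactSpace M]
    (hconv : ∀ P Q : M, P ≠ Q → ∃ R : M,
      dist P R = dist P Q / 2 ∧ dist R Q = dist P Q / 2) :
    ∀ P Q : M, ∃ γ : ℝ → M, ContinuousOn γ (Set.Icc 0 1) ∧ γ 0 = P ∧ γ 1 = Q ∧
      ∀ t ∈ Set.Icc (0 : ℝ) 1, dist P Q = dist P (γ t) + dist (γ t) Q := by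
  intro P Q
  haveI : Nonempty M := ⟨P⟩
  have hm : ∀ a b : M, ∃ r : M, dist a r = dist a b / 2 ∧ dist r b = dist a b / 2 := by
    intro a b
    by_cases h : a = b
    · exact ⟨a, by simp [h]⟩
    · exact hconv a b h
  set mid : M → M → M := fun a b => (hm a b).choose with hmiddef
  have hmid : ∀ a b : M, dist a (mid a b) = dist a b / 2 ∧ dist (mid a b) b = dist a b / 2 :=
    fun a b => (hm a b).choose_spec
  set D := dist P Q with hDdef
  have hD0 : 0 ≤ D := dist_nonneg
  set g : ℕ → ℕ → M := Stmt10Aux.geoGrid mid P Q with hgdef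
  set u : ℝ → ℕ → M := fun t n => g n (⌊t * 2 ^ n⌋₊) with hudef
  have hg0 : ∀ n, g n 0 = P := fun n => Stmt10Aux.grid_zero mid P Q n
  have hgtop : ∀ n, g n (2 ^ n) = Q := fun n => Stmt10Aux.grid_top mid P Q n
  have hchain : ∀ n k l, k ≤ l → dist (g n k) (g n l) ≤ (l - k : ℕ) * (D / 2 ^ n) :=
    fun n k l h => Stmt10Aux.grid_dist_le mid P Q hmid n h
  -- floor estimates
  have hfl1 : ∀ (t : ℝ) (n : ℕ), 0 ≤ t → 2 * ⌊t * 2 ^ n⌋₊ ≤ ⌊t * 2 ^ (n + 1)⌋₊ := by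
    intro t n ht
    apply Nat.le_floor
    have h1 : (⌊t * 2 ^ n⌋₊ : ℝ) ≤ t * 2 ^ n := Nat.floor_le (by positivity)
    push_cast
    rw [pow_succ]
    nlinarith
  have hfl2 : ∀ (t : ℝ) (n : ℕ), 0 ≤ t → ⌊t * 2 ^ (n + 1)⌋₊ ≤ 2 * ⌊t * 2 ^ n⌋₊ + 1 := by
    intro t n ht
    have h1 : t * 2 ^ n < ⌊t * 2 ^ n⌋₊ + 1 := Nat.lt_floor_add_one _
    have : ⌊t * 2 ^ (n + 1)⌋₊ < 2 * ⌊t * 2 ^ n⌋₊ + 2 := by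
      rw [Nat.floor_lt (by positivity)]
      push_cast
      rw [pow_succ]
      nlinarith
    omega
  -- the sequence is Cauchy for t ≥ 0
  have hstep : ∀ (t : ℝ), 0 ≤ t → ∀ n, dist (u t n) (u t (n + 1)) ≤ (D / 2) * (1 / 2) ^ n := by
    intro t ht n
    have hdb : g (n + 1) (2 * ⌊t * 2 ^ n⌋₊) = g n (⌊t * 2 ^ n⌋₊) :=
      Stmt10Aux.grid_double mid P Q n _
    have h1 := hfl1 t n ht
    have h2 := hfl2 t n ht
    have := hchain (n + 1) (2 * ⌊t * 2 ^ n⌋₊) (⌊t * 2 ^ (n + 1)⌋₊) h1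
    rw [hdb] at this
    have hsub : ((⌊t * 2 ^ (n + 1)⌋₊ - 2 * ⌊t * 2 ^ n⌋₊ : ℕ) : ℝ) ≤ 1 := by
      have : ⌊t * 2 ^ (n + 1)⌋₊ - 2 * ⌊t * 2 ^ n⌋₊ ≤ 1 := by omega
      exact_mod_cast this
    have hpos : (0 : ℝ) ≤ D / 2 ^ (n + 1) := by positivity
    calc dist (u t n) (u t (n + 1))
        ≤ ((⌊t * 2 ^ (n + 1)⌋₊ - 2 * ⌊t * 2 ^ n⌋₊ : ℕ) : ℝ) * (D / 2 ^ (n + 1)) := this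
      _ ≤ 1 * (D / 2 ^ (n + 1)) := by
          exact mul_le_mul_of_nonneg_right hsub hpos
      _ = (D / 2) * (1 / 2) ^ n := by
          rw [one_mul, div_pow, one_pow, pow_succ]
          ring
  have hcauchy : ∀ (t : ℝ), 0 ≤ t → CauchySeq (u t) := by
    intro t ht
    exact cauchySeq_of_le_geometric (1 / 2) (D / 2) (by norm_num) (hstep t ht)
  -- define γ as the limit
  set γ : ℝ → M := fun t => Filter.limUnder Filter.atTop (u t) with hγdef
  have htend : ∀ (t : ℝ), 0 ≤ t → Filter.Tendsto (u t) Filter.atTop (nhds (γ t)) :=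
    fun t ht => (hcauchy t ht).tendsto_limUnder
  have hlip0 : ∀ s t : ℝ, 0 ≤ s → s ≤ t → dist (γ s) (γ t) ≤ D * (t - s) := by
    intro s t hs hst
    have ht : 0 ≤ t := le_trans hs hst
    have hb : ∀ n, dist (u s n) (u t n) ≤ D * (t - s) + D * (1 / 2) ^ n := by
      intro n
      have hmono : ⌊s * 2 ^ n⌋₊ ≤ ⌊t * 2 ^ n⌋₊ :=
        Nat.floor_mono (by nlinarith [pow_pos (by norm_num : (0:ℝ) < 2) n])
      have := hchain n (⌊s * 2 ^ n⌋₊) (⌊t * 2 ^ n⌋₊) hmono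
      have hcast : ((⌊t * 2 ^ n⌋₊ - ⌊s * 2 ^ n⌋₊ : ℕ) : ℝ) ≤ (t - s) * 2 ^ n + 1 := by
        rw [Nat.cast_sub hmono]
        have h1 : (⌊t * 2 ^ n⌋₊ : ℝ) ≤ t * 2 ^ n := Nat.floor_le (by positivity)
        have h2 : s * 2 ^ n < ⌊s * 2 ^ n⌋₊ + 1 := Nat.lt_floor_add_one _
        nlinarith
      have hpos : (0 : ℝ) ≤ D / 2 ^ n := by positivity
      have h2n : (0 : ℝ) < 2 ^ n := by positivity
      calc dist (u s n) (u t n)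
          ≤ ((⌊t * 2 ^ n⌋₊ - ⌊s * 2 ^ n⌋₊ : ℕ) : ℝ) * (D / 2 ^ n) := this
        _ ≤ ((t - s) * 2 ^ n + 1) * (D / 2 ^ n) := mul_le_mul_of_nonneg_right hcast hpos
        _ = D * (t - s) + D * (1 / 2) ^ n := by
            simp only [one_div, inv_pow]
            field_simp
    have hd : Filter.Tendsto (fun n => dist (u s n) (u t n)) Filter.atTop
        (nhds (dist (γ s) (γ t))) := (htend s hs).dist (htend t ht)
    have hlim : Filter.Tendsto (fun n : ℕ => D * (t - s) + D * (1 / 2) ^ n) Filter.atTop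
        (nhds (D * (t - s))) := by
      have := ((tendsto_pow_atTop_nhds_zero_of_lt_one (by norm_num) (by norm_num)
        : Filter.Tendsto (fun n : ℕ => (1 / 2 : ℝ) ^ n) Filter.atTop (nhds 0)).const_mul D)
      simpa using (tendsto_const_nhds (x := D * (t - s)) (f := Filter.atTop)).add this
    exact le_of_tendsto_of_tendsto' hd hlim hb
  -- endpoints
  have hγ0 : γ 0 = P := by
    have hconst : ∀ n, u 0 n = P := by
      intro n
      simp only [hudef, zero_mul, Nat.floor_zero]
      exact Stmt10Aux.grid_zero mid P Q n
    have : Filter.Tendsto (u 0) Filter.atTop (nhds P) := by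
      simp only [funext hconst]
      exact tendsto_const_nhds
    exact tendsto_nhds_unique (htend 0 le_rfl) this
  have hγ1 : γ 1 = Q := by
    have hconst : ∀ n, u 1 n = Q := by
      intro n
      have hfl : ⌊(1 : ℝ) * 2 ^ n⌋₊ = 2 ^ n := by
        rw [one_mul]
        rw [show ((2 : ℝ) ^ n) = ((2 ^ n : ℕ) : ℝ) by push_cast; ring]
        exact Nat.floor_natCast _
      simp only [hudef, hfl]
      exact Stmt10Aux.grid_top mid P Q n
    have : Filter.Tendsto (u 1) Filter.atTop (nhds Q) := by
      simp only [funext hconst]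
      exact tendsto_const_nhds
    exact tendsto_nhds_unique (htend 1 zero_le_one) this
  refine ⟨γ, ?_, hγ0, hγ1, ?_⟩
  · -- continuity
    apply LipschitzOnWith.continuousOn (K := D.toNNReal)
    apply LipschitzOnWith.of_dist_le_mul
    intro x hx y hy
    rw [Real.coe_toNNReal _ hD0]
    rcases le_total x y with h | h
    · have := hlip0 x y hx.1 h
      rw [Real.dist_eq, abs_of_nonpos (by linarith)]
      linarith
    · have := hlip0 y x hy.1 h
      rw [dist_comm (γ x) (γ y), Real.dist_eq, abs_of_nonneg (by linarith)]
      linarith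
  · -- additivity
    intro t ht
    have hk : ∀ n, ⌊t * 2 ^ n⌋₊ ≤ 2 ^ n := by
      intro n
      have : t * 2 ^ n ≤ ((2 ^ n : ℕ) : ℝ) := by
        push_cast
        nlinarith [pow_pos (by norm_num : (0:ℝ) < 2) n, ht.1, ht.2]
      calc ⌊t * 2 ^ n⌋₊ ≤ ⌊((2 ^ n : ℕ) : ℝ)⌋₊ := Nat.floor_mono this
        _ = 2 ^ n := Nat.floor_natCast _
    have heq : ∀ n, dist P (u t n) + dist (u t n) Q = D := by
      intro n
      set k := ⌊t * 2 ^ n⌋₊ with hkdef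
      have e1 : dist P (u t n) ≤ (k : ℕ) * (D / 2 ^ n) := by
        have := hchain n 0 k (Nat.zero_le _)
        rwa [hg0 n, Nat.sub_zero] at this
      have e2 : dist (u t n) Q ≤ ((2 ^ n - k : ℕ) : ℝ) * (D / 2 ^ n) := by
        have := hchain n k (2 ^ n) (hk n)
        rwa [hgtop n] at this
      have hsum : (k : ℝ) * (D / 2 ^ n) + ((2 ^ n - k : ℕ) : ℝ) * (D / 2 ^ n) = D := by
        rw [Nat.cast_sub (hk n)]
        have h2n : (2 : ℝ) ^ n ≠ 0 := by positivity
        push_cast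
        field_simp
        rw [hkdef]; ring
      have hge : D ≤ dist P (u t n) + dist (u t n) Q := dist_triangle P (u t n) Q
      linarith
    have hd : Filter.Tendsto (fun n => dist P (u t n) + dist (u t n) Q) Filter.atTop
        (nhds (dist P (γ t) + dist (γ t) Q)) :=
      (tendsto_const_nhds.dist (htend t ht.1)).add ((htend t ht.1).dist tendsto_const_nhds)
    have : Filter.Tendsto (fun _ : ℕ => D) Filter.atTop
        (nhds (dist P (γ t) + dist (γ t) Q)) := by
      simpa only [funext heq] using hd
    exact (tendsto_nhds_unique this tendsto_const_nhds).symm
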